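/- (Second-order random target lemma) Under the equilibrium assumption, suppose that for every i ∈ V the edge-chain return time τ̂⁺_{e→in_i} depends only on i and not on the edge e ∈ in_i. Then there is a constant κ̃ such that Σ_{j∈V} π_j τ̃_{i→j} = κ̃ for every i ∈ V, where τ̃_{i→j} are the second-order mean hitting times and π is the node stationary distribution. Moreover κ̃ = κ − b^T π, where κ is the Kemeny constant of the edge chain P̂ and b is the offset vector from the representation of set-hitting times. -/

import Mathlib

open scoped ENNReal Classical

/-- `hitBy P S n i = P(T_S ≤ n | Y_0 = i)` for a Markov chain with transition matrix `P`. -/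
noncomputable def hitBy {V : Type*} (P : V → V → ℝ≥0∞) (S : Set V) : ℕ → V → ℝ≥0∞
  | 0, i => if i ∈ S then 1 else 0
  | n + 1, i => if i ∈ S then 1 else ∑' j, P i j * hitBy P S n j

/-- The mean hitting time `τ_{i→S} = E[T_S | Y_0 = i]` (extended-real valued). -/
noncomputable def meanHit {V : Type*} (P : V → V → ℝ≥0∞) (S : Set V) (i : V) : ℝ≥0∞ :=
  ∑' n, (1 - hitBy P S n i)

/-- The mean return time `τ⁺_{i→S} = 1 + ∑_j P_{ij} τ_{j→S}`. -/
noncomputable def returnTime {V : Type*} (P : V → V → ℝ≥0∞) (S : Set V) (i : V) : ℝ≥0∞ :=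
  1 + ∑' j, P i j * meanHit P S j

section Aux
variable {E : Type*} [Fintype E] (P : E → E → ℝ≥0∞) (S : Set E)

lemma hitBy_mem {e : E} (he : e ∈ S) (n : ℕ) : hitBy P S n e = 1 := by
  cases n <;> simp [hitBy, he]

lemma hitBy_succ (n : ℕ) (e : E) :
    hitBy P S (n+1) e = if e ∈ S then 1 else ∑ j, P e j * hitBy P S n j := by
  rw [show hitBy P S (n+1) e = if e ∈ S then 1 else ∑' j, P e j * hitBy P S n j from rfl,
    tsum_fintype]

lemma hitBy_le_one (hst : ∀ e, ∑ f, P e f = 1) : ∀ n (e : E), hitBy P S n e ≤ 1 := by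
  intro n
  induction n with
  | zero => intro e; by_cases he : e ∈ S <;> simp [hitBy, he]
  | succ n ih =>
    intro e
    rw [hitBy_succ]
    split
    · exact le_rfl
    · calc ∑ j, P e j * hitBy P S n j ≤ ∑ j, P e j * 1 := by
            gcongr with j _; exact ih j
        _ = 1 := by simp [hst e]

lemma hitBy_mono (e : E) : Monotone (fun n => hitBy P S n e) := by
  have key : ∀ n (e : E), hitBy P S n e ≤ hitBy P S (n+1) e := by
    intro n
    induction n with
    | zero =>
      intro e
      by_cases he : e ∈ S
      · simp [hitBy_mem P S he]
      · simp [hitBy, he, tsum_fintype]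
    | succ n ih =>
      intro e
      rw [hitBy_succ, hitBy_succ]
      split
      · exact le_rfl
      · gcongr with j _; exact ih j
  exact monotone_nat_of_le_succ (fun n => key n e)

/-- recursion for tail probabilities off `S` -/
lemma tail_succ (hst : ∀ e, ∑ f, P e f = 1) {e : E} (he : e ∉ S) (n : ℕ) :
    1 - hitBy P S (n+1) e = ∑ j, P e j * (1 - hitBy P S n j) := by
  have hA : hitBy P S (n+1) e = ∑ j, P e j * hitBy P S n j := by
    rw [hitBy_succ, if_neg he]
  rw [hA]
  have hne : (∑ j, P e j * hitBy P S n j) ≠ ⊤ := by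
    refine ne_top_of_le_ne_top ENNReal.one_ne_top ?_
    calc ∑ j, P e j * hitBy P S n j ≤ ∑ j, P e j * 1 := by
          gcongr with j _; exact hitBy_le_one P S hst n j
      _ = 1 := by simp [hst e]
  refine ENNReal.sub_eq_of_eq_add hne ?_
  rw [← Finset.sum_add_distrib]
  calc (1 : ℝ≥0∞) = ∑ j, P e j := (hst e).symm
    _ = ∑ j, (P e j * (1 - hitBy P S n j) + P e j * hitBy P S n j) := by
        refine Finset.sum_congr rfl fun j _ => ?_
        rw [← mul_add, tsub_add_cancel_of_le (hitBy_le_one P S hst n j), mul_one]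

lemma hitBy_pos_of_path {s : E} (hs : s ∈ S) (e : E)
    (h : Relation.ReflTransGen (fun a b => 0 < P a b) e s) :
    ∃ n, 0 < hitBy P S n e := by
  induction h using Relation.ReflTransGen.head_induction_on with
  | refl => exact ⟨0, by simp [hitBy, hs]⟩
  | head hab _ ih =>
    rename_i x y _
    obtain ⟨n, hn⟩ := ih
    refine ⟨n + 1, ?_⟩
    rw [hitBy_succ]
    split
    · exact zero_lt_one
    · calc (0:ℝ≥0∞) < P x y * hitBy P S n y := by
            exact ENNReal.mul_pos hab.ne' hn.ne'
        _ ≤ ∑ j, P x j * hitBy P S n j :=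
            Finset.single_le_sum (f := fun j => P x j * hitBy P S n j)
              (fun j _ => zero_le) (Finset.mem_univ y)

/-- uniform positive lower bound on hitting probability at some fixed time -/
lemma exists_uniform_hit [Nonempty E]
    (hirr : ∀ e f : E, Relation.ReflTransGen (fun a b => 0 < P a b) e f)
    {s : E} (hs : s ∈ S) :
    ∃ N : ℕ, ∃ δ : ℝ≥0∞, 0 < δ ∧ ∀ e, δ ≤ hitBy P S N e := by
  choose n hn using fun e => hitBy_pos_of_path P S hs e (hirr e s)
  set N := Finset.univ.sup n with hN
  refine ⟨N, Finset.univ.inf' Finset.univ_nonempty (fun e => hitBy P S N e), ?_, ?_⟩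
  · rw [Finset.lt_inf'_iff]
    intro e _
    exact lt_of_lt_of_le (hn e) (hitBy_mono P S e (Finset.le_sup (Finset.mem_univ e)))
  · intro e
    exact Finset.inf'_le _ (Finset.mem_univ e)

lemma tail_submul (hst : ∀ e, ∑ f, P e f = 1) {N : ℕ} {c : ℝ≥0∞}
    (hc : ∀ e, 1 - hitBy P S N e ≤ c) :
    ∀ n (e : E), 1 - hitBy P S (n + N) e ≤ c * (1 - hitBy P S n e) := by
  intro n
  induction n with
  | zero =>
    intro e
    by_cases he : e ∈ S
    · simp [hitBy_mem P S he]
    · simpa [hitBy, he] using hc e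
  | succ n ih =>
    intro e
    by_cases he : e ∈ S
    · simp [hitBy_mem P S he]
    · rw [show n + 1 + N = (n + N) + 1 by ring, tail_succ P S hst he,
        tail_succ P S hst he, Finset.mul_sum]
      refine Finset.sum_le_sum fun j _ => ?_
      rw [show c * (P e j * (1 - hitBy P S n j)) = P e j * (c * (1 - hitBy P S n j)) by ring]
      gcongr
      exact ih j

lemma tail_geom (hst : ∀ e, ∑ f, P e f = 1) {N : ℕ} {c : ℝ≥0∞}
    (hc : ∀ e, 1 - hitBy P S N e ≤ c) :
    ∀ k (e : E), 1 - hitBy P S (k * N) e ≤ c ^ k := by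
  intro k
  induction k with
  | zero => intro e; simpa [hitBy] using (by split <;> simp : (1:ℝ≥0∞) - (if e ∈ S then 1 else 0) ≤ 1)
  | succ k ih =>
    intro e
    rw [Nat.succ_mul]
    calc 1 - hitBy P S (k * N + N) e ≤ c * (1 - hitBy P S (k * N) e) :=
          tail_submul P S hst hc (k * N) e
      _ ≤ c * c ^ k := by gcongr; exact ih e
      _ = c ^ (k+1) := by ring

lemma kac (hst : ∀ e, ∑ f, P e f = 1)
    (πhat : E → ℝ≥0∞) (hπsum : ∑ e, πhat e = 1)
    (hπstat : ∀ f, ∑ e, πhat e * P e f = πhat f)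
    (hirr : ∀ e f : E, Relation.ReflTransGen (fun a b => 0 < P a b) e f)
    {s : E} (hs : s ∈ S) :
    ∑ e ∈ Finset.univ.filter (· ∈ S), πhat e * returnTime P S e = 1 := by
  have : Nonempty E := ⟨s⟩
  classical
  set u : ℕ → E → ℝ≥0∞ := fun n e => 1 - hitBy P S n e with hu
  set w : ℕ → ℝ≥0∞ := fun n => ∑ e, πhat e * u n e with hw
  set K : ℕ → ℝ≥0∞ :=
    fun n => ∑ e ∈ Finset.univ.filter (· ∈ S), πhat e * ∑ j, P e j * u n j with hK
  -- one-step identity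
  have hstep : ∀ n, w n = K n + w (n + 1) := by
    intro n
    have h1 : ∑ e, πhat e * ∑ j, P e j * u n j = w n := by
      calc ∑ e, πhat e * ∑ j, P e j * u n j
          = ∑ e, ∑ j, πhat e * P e j * u n j := by
            refine Finset.sum_congr rfl fun e _ => ?_
            rw [Finset.mul_sum]; exact Finset.sum_congr rfl fun j _ => by ring
        _ = ∑ j, (∑ e, πhat e * P e j) * u n j := by
            rw [Finset.sum_comm]
            exact Finset.sum_congr rfl fun j _ => (Finset.sum_mul _ _ _).symm
        _ = ∑ j, πhat j * u n j := by simp only [hπstat]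
    have h4 : w (n + 1) =
        ∑ e ∈ Finset.univ.filter (fun e => ¬ e ∈ S), πhat e * u (n+1) e := by
      rw [hw]
      beta_reduce
      rw [← Finset.sum_filter_add_sum_filter_not Finset.univ (· ∈ S)
        (fun e => πhat e * u (n+1) e)]
      have hz : ∑ e ∈ Finset.univ.filter (· ∈ S), πhat e * u (n+1) e = 0 := by
        refine Finset.sum_eq_zero fun e he => ?_
        have heS : e ∈ S := (Finset.mem_filter.mp he).2
        simp [hu, hitBy_mem P S heS]
      rw [hz, zero_add]
    rw [← h1, ← Finset.sum_filter_add_sum_filter_not Finset.univ (· ∈ S)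
      (fun e => πhat e * ∑ j, P e j * u n j), h4, hK]
    congr 1
    refine Finset.sum_congr rfl fun e he => ?_
    have heS : e ∉ S := (Finset.mem_filter.mp he).2
    rw [hu]
    congr 1
    exact (tail_succ P S hst heS n).symm
  -- partial sums telescope
  have hwle : ∀ n, w n ≤ 1 := by
    intro n
    rw [hw, ← hπsum]
    refine Finset.sum_le_sum fun e _ => ?_
    calc πhat e * u n e ≤ πhat e * 1 := by gcongr; exact tsub_le_self.trans le_rfl
      _ = πhat e := mul_one _
  have hpart : ∀ N, w 0 = (∑ n ∈ Finset.range N, K n) + w N := by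
    intro N
    induction N with
    | zero => simp
    | succ N ih =>
      rw [ih, hstep N, Finset.sum_range_succ, add_assoc]
  -- the infimum of w is zero
  have hinf : ⨅ n, w n = 0 := by
    obtain ⟨N₀, δ, hδ, hδle⟩ := exists_uniform_hit P S hirr hs
    set c : ℝ≥0∞ := 1 - δ with hc
    have hclt : c < 1 := ENNReal.sub_lt_self ENNReal.one_ne_top one_ne_zero hδ.ne'
    have hcb : ∀ e, 1 - hitBy P S N₀ e ≤ c := fun e => tsub_le_tsub_left (hδle e) 1
    have hgeom : ∀ k, w (k * N₀) ≤ c ^ k := by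
      intro k
      calc w (k * N₀) ≤ ∑ e, πhat e * c ^ k := by
            refine Finset.sum_le_sum fun e _ => ?_
            gcongr
            exact tail_geom P S hst hcb k e
        _ = c ^ k := by rw [← Finset.sum_mul, hπsum, one_mul]
    by_contra h
    have hpos : 0 < ⨅ n, w n := pos_iff_ne_zero.mpr h
    obtain ⟨k, hk⟩ := ((ENNReal.tendsto_pow_atTop_nhds_zero_of_lt_one hclt).eventually_lt_const
      hpos).exists
    exact absurd ((iInf_le _ (k * N₀)).trans (hgeom k)) (not_le.mpr hk)
  -- sum of K
  have hKsum : ∑' n, K n = w 0 := by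
    have hSN : ∀ N, ∑ n ∈ Finset.range N, K n = w 0 - w N := by
      intro N
      exact (ENNReal.sub_eq_of_eq_add (ne_top_of_le_ne_top ENNReal.one_ne_top (hwle N))
        (by rw [hpart N])).symm
    rw [ENNReal.tsum_eq_iSup_sum' (fun N => Finset.range N) (fun t => ⟨t.sup id + 1,
      fun x hx => Finset.mem_range.mpr (Nat.lt_succ_of_le (Finset.le_sup (f := id) hx))⟩)]
    calc ⨆ N, ∑ n ∈ Finset.range N, K n = ⨆ N, (w 0 - w N) := by
          exact iSup_congr hSN
      _ = w 0 - ⨅ N, w N := ENNReal.sub_iInf.symm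
      _ = w 0 := by rw [hinf, tsub_zero]
  -- assemble
  have hret : ∑ e ∈ Finset.univ.filter (· ∈ S), πhat e * returnTime P S e
      = (∑ e ∈ Finset.univ.filter (· ∈ S), πhat e) + ∑' n, K n := by
    have hrt : ∀ e, πhat e * returnTime P S e = πhat e + ∑' n, πhat e * ∑ j, P e j * u n j := by
      intro e
      rw [returnTime, tsum_fintype, mul_add, mul_one, ENNReal.tsum_mul_left]
      congr 1
      congr 1
      have : ∀ j, meanHit P S j = ∑' n, u n j := fun j => rfl
      calc ∑ j, P e j * meanHit P S j = ∑ j, ∑' n, P e j * u n j := by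
            refine Finset.sum_congr rfl fun j _ => ?_
            rw [this j, ENNReal.tsum_mul_left]
        _ = ∑' n, ∑ j, P e j * u n j := (Summable.tsum_finsetSum (fun j _ => ENNReal.summable)).symm
    calc ∑ e ∈ Finset.univ.filter (· ∈ S), πhat e * returnTime P S e
        = ∑ e ∈ Finset.univ.filter (· ∈ S),
            (πhat e + ∑' n, πhat e * ∑ j, P e j * u n j) := Finset.sum_congr rfl fun e _ => hrt e
      _ = (∑ e ∈ Finset.univ.filter (· ∈ S), πhat e)
          + ∑ e ∈ Finset.univ.filter (· ∈ S), ∑' n, πhat e * ∑ j, P e j * u n j :=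
            Finset.sum_add_distrib
      _ = _ := by
            congr 1
            rw [← Summable.tsum_finsetSum (fun e _ => ENNReal.summable)]
  rw [hret, hKsum]
  have hw0 : w 0 = ∑ e ∈ Finset.univ.filter (fun e => ¬ e ∈ S), πhat e := by
    rw [hw]
    beta_reduce
    rw [← Finset.sum_filter_add_sum_filter_not Finset.univ (· ∈ S)
      (fun e => πhat e * u 0 e)]
    have h1 : ∑ e ∈ Finset.univ.filter (· ∈ S), πhat e * u 0 e = 0 :=
      Finset.sum_eq_zero fun e he => by
        simp [hu, hitBy_mem P S (Finset.mem_filter.mp he).2]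
    rw [h1, zero_add]
    refine Finset.sum_congr rfl fun e he => ?_
    have : e ∉ S := (Finset.mem_filter.mp he).2
    simp [hu, hitBy, this]
  rw [hw0, ← hπsum]
  exact Finset.sum_filter_add_sum_filter_not Finset.univ (· ∈ S) πhat

end Aux

/-- **Second-order random target lemma.** At equilibrium, if the edge-chain return time
`τ̂⁺_{e→in_i}` depends only on `i` and not on `e ∈ in_i`, then `∑_j π_j τ̃_{i→j}` is a
constant `κ̃` independent of `i`; moreover `κ̃ = κ − bᵀπ`, where `κ` is the Kemeny
constant of the edge chain and `b` the offset vector in the representation of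
set-hitting times `τ̂_{e→in_i} = ∑_{f∈in_i} α_f τ̂_{e→f} − b_i`. -/
theorem secondOrder_random_target {V E : Type*} [Fintype V] [Fintype E]
    [DecidableEq V] [DecidableEq E]
    (sou ter : E → V)
    (hinj : Function.Injective fun e => (sou e, ter e))
    (hin : ∀ i : V, ∃ e : E, ter e = i)
    (Phat : E → E → ℝ≥0∞)
    (hsupp : ∀ e f, Phat e f ≠ 0 → ter e = sou f)
    (hst : ∀ e, ∑ f, Phat e f = 1)
    (hirr : ∀ e f : E, Relation.ReflTransGen (fun a b => 0 < Phat a b) e f)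
    (πhat : E → ℝ≥0∞) (hπpos : ∀ e, 0 < πhat e) (hπsum : ∑ e, πhat e = 1)
    (hπstat : ∀ f, ∑ e, πhat e * Phat e f = πhat f)
    (π : V → ℝ≥0∞)
    (hπ : ∀ i, π i = ∑ e ∈ Finset.univ.filter (fun e => ter e = i), πhat e)
    -- real-valued mean hitting times `τ̂_{e→S}` of the edge chain
    (τhat : E → Set E → ℝ) (hτhat : ∀ e S, τhat e S = (meanHit Phat S e).toReal)
    -- the edge-chain return times to `in_i` depend only on `i` and not on `e ∈ in_i`
    (hret : ∀ e e' : E, ter e = ter e' →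
      returnTime Phat {f | ter f = ter e} e = returnTime Phat {f | ter f = ter e'} e')
    -- the coefficients `α_f = π̂_f τ̂⁺_{f→in_{ter f}}`
    (a : E → ℝ)
    (ha : ∀ f, a f = (πhat f * returnTime Phat {g | ter g = ter f} f).toReal)
    -- the offset vector `b` of the representation of set-hitting times (Lemma 2.6)
    (b : V → ℝ)
    (hb : ∀ i (e : E), τhat e {f | ter f = i} =
      (∑ f ∈ Finset.univ.filter (fun f => ter f = i), a f * τhat e {f}) - b i)
    -- `κ` is the Kemeny constant of the edge chain
    (κ : ℝ) (hκ : ∀ e : E, ∑ f, (πhat f).toReal * τhat e {f} = κ)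
    -- the second-order mean hitting times at equilibrium:
    -- `τ̃_{i→j} = ∑_{e∈in_i} λ_e τ̂_{e→in_j}` with `λ_e = π̂_e/π_{ter e}`
    (τtilde : V → V → ℝ)
    (hτtilde : ∀ i j, τtilde i j =
      ∑ e ∈ Finset.univ.filter (fun e => ter e = i),
        (πhat e / π i).toReal * τhat e {f | ter f = j}) :
    ∀ i : V, ∑ j, (π j).toReal * τtilde i j = κ - ∑ j, b j * (π j).toReal := by
  classical
  -- choose a reference in-edge for every vertex
  choose e₀ he₀ using hin
  -- the constant return time to `in_j`
  set r : V → ℝ≥0∞ := fun j => returnTime Phat {g | ter g = j} (e₀ j) with hr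
  have hconst : ∀ f : E, returnTime Phat {g | ter g = ter f} f = r (ter f) := by
    intro f
    have h := hret f (e₀ (ter f)) (he₀ (ter f)).symm
    rw [h, hr]
    beta_reduce
    rw [he₀ (ter f)]
  -- Kac's formula for the sets `in_j`
  have hkac : ∀ j : V, π j * r j = 1 := by
    intro j
    have hmem : e₀ j ∈ {g : E | ter g = j} := he₀ j
    have h := kac Phat {g : E | ter g = j} hst πhat hπsum hπstat hirr hmem
    have h' : ∑ e ∈ Finset.univ.filter (fun e => ter e = j),
        πhat e * returnTime Phat {g | ter g = j} e = 1 := by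
      rw [← h]
      refine Finset.sum_congr ?_ (fun x _ => rfl)
      ext x
      simp [Set.mem_setOf_eq]
    replace h := h'
    have h2 : ∀ e ∈ Finset.univ.filter (fun e : E => ter e = j),
        πhat e * returnTime Phat {g | ter g = j} e = πhat e * r j := by
      intro e he
      have hte : ter e = j := (Finset.mem_filter.mp he).2
      have := hconst e
      rw [hte] at this
      rw [this]
    rw [Finset.sum_congr rfl h2, ← Finset.sum_mul, ← hπ j] at h
    exact h
  -- basic finiteness / positivity
  have hπhat_ne_top : ∀ e, πhat e ≠ ⊤ := by
    intro e
    refine ne_top_of_le_ne_top (hπsum ▸ ENNReal.one_ne_top) ?_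
    exact Finset.single_le_sum (fun f _ => zero_le) (Finset.mem_univ e)
  have hπ_ne_top : ∀ j, π j ≠ ⊤ := by
    intro j
    rw [hπ j]
    refine ne_top_of_le_ne_top (hπsum ▸ ENNReal.one_ne_top) ?_
    exact Finset.sum_le_sum_of_subset (Finset.filter_subset _ _)
  have hπ_ne_zero : ∀ j, π j ≠ 0 := by
    intro j h
    rw [hπ j] at h
    have hmem : e₀ j ∈ Finset.univ.filter (fun e => ter e = j) :=
      Finset.mem_filter.mpr ⟨Finset.mem_univ _, he₀ j⟩
    have hle := Finset.single_le_sum (f := πhat) (fun f _ => zero_le) hmem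
    rw [h] at hle
    exact (hπpos (e₀ j)).not_ge hle
  -- key identity: π_{ter f} · a_f = π̂_f
  have key1 : ∀ f : E, (π (ter f)).toReal * a f = (πhat f).toReal := by
    intro f
    rw [ha f, hconst f, ← ENNReal.toReal_mul]
    congr 1
    calc π (ter f) * (πhat f * r (ter f)) = πhat f * (π (ter f) * r (ter f)) := by ring
      _ = πhat f := by rw [hkac (ter f), mul_one]
  -- the weights λ sum to 1
  have key2 : ∀ i : V, ∑ e ∈ Finset.univ.filter (fun e => ter e = i),
      (πhat e / π i).toReal = 1 := by
    intro i
    have h1 : ∑ e ∈ Finset.univ.filter (fun e => ter e = i), (πhat e / π i).toReal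
        = (∑ e ∈ Finset.univ.filter (fun e => ter e = i), (πhat e).toReal) / (π i).toReal := by
      rw [Finset.sum_div]
      exact Finset.sum_congr rfl fun e _ => ENNReal.toReal_div _ _
    rw [h1, ← ENNReal.toReal_sum (fun e _ => hπhat_ne_top e), ← hπ i]
    exact div_self (ENNReal.toReal_ne_zero.mpr ⟨hπ_ne_zero i, hπ_ne_top i⟩)
  -- the random-target identity for a single starting edge
  have key3 : ∀ e : E, ∑ j, (π j).toReal * τhat e {f | ter f = j}
      = κ - ∑ j, b j * (π j).toReal := by
    intro e
    calc ∑ j, (π j).toReal * τhat e {f | ter f = j}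
        = ∑ j, ((∑ f ∈ Finset.univ.filter (fun f => ter f = j),
            (π (ter f)).toReal * a f * τhat e {f}) - b j * (π j).toReal) := by
          refine Finset.sum_congr rfl fun j _ => ?_
          rw [hb j e, mul_sub, Finset.mul_sum]
          congr 1
          · refine Finset.sum_congr rfl fun f hf => ?_
            rw [(Finset.mem_filter.mp hf).2]
            ring
          · ring
      _ = (∑ j, ∑ f ∈ Finset.univ.filter (fun f => ter f = j),
            (π (ter f)).toReal * a f * τhat e {f}) - ∑ j, b j * (π j).toReal := by
          rw [Finset.sum_sub_distrib]
      _ = (∑ f, (π (ter f)).toReal * a f * τhat e {f}) - ∑ j, b j * (π j).toReal := by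
          rw [Finset.sum_fiberwise]
      _ = (∑ f, (πhat f).toReal * τhat e {f}) - ∑ j, b j * (π j).toReal := by
          congr 1
          exact Finset.sum_congr rfl fun f _ => by rw [key1 f]
      _ = κ - ∑ j, b j * (π j).toReal := by rw [hκ e]
  intro i
  calc ∑ j, (π j).toReal * τtilde i j
      = ∑ j, ∑ e ∈ Finset.univ.filter (fun e => ter e = i),
          (πhat e / π i).toReal * ((π j).toReal * τhat e {f | ter f = j}) := by
        refine Finset.sum_congr rfl fun j _ => ?_
        rw [hτtilde i j, Finset.mul_sum]
        exact Finset.sum_congr rfl fun e _ => by ring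
    _ = ∑ e ∈ Finset.univ.filter (fun e => ter e = i),
          (πhat e / π i).toReal * ∑ j, (π j).toReal * τhat e {f | ter f = j} := by
        rw [Finset.sum_comm]
        exact Finset.sum_congr rfl fun e _ => (Finset.mul_sum _ _ _).symm
    _ = ∑ e ∈ Finset.univ.filter (fun e => ter e = i),
          (πhat e / π i).toReal * (κ - ∑ j, b j * (π j).toReal) := by
        exact Finset.sum_congr rfl fun e _ => by rw [key3 e]
    _ = κ - ∑ j, b j * (π j).toReal := by
        rw [← Finset.sum_mul, key2 i, one_mul]
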